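/- arXiv:1404.5015 — 5 statements merged into one kernel-verified Lean document; each statement's English description precedes it below -/
import Mathlib

section
/- Let $H$ be a hypergraph in which every edge has size at most $k$ (with $k \geq 2$), and let $S$ be a vertex cover of $H$. Then there exist a subhypergraph $H' \subseteq H$ and a subset $S' \subseteq S$ such that $|H'| \geq \frac{k}{2^k}|H|$ and every edge of $H'$ intersects $S'$ in exactly one vertex. -/
lemma aux_pow_stmt1 (m k : ℕ) (hm : 1 ≤ m) (hmk : m ≤ k) : k * 2 ^ m ≤ m * 2 ^ k := by
  induction k, hmk using Nat.le_induction with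
  | base => exact le_rfl
  | succ k hk ih =>
    have h1 : (k + 1) * 2 ^ m ≤ 2 * (k * 2 ^ m) := by nlinarith [Nat.one_le_two_pow (n := m)]
    calc (k + 1) * 2 ^ m ≤ 2 * (k * 2 ^ m) := h1
      _ ≤ 2 * (m * 2 ^ k) := by omega
      _ = m * 2 ^ (k + 1) := by ring

lemma edge_count_stmt1 {V : Type*} [DecidableEq V] (k : ℕ) (S e : Finset V)
    (hs : e.card ≤ k) (hne : ∃ v ∈ S, v ∈ e) :
    k * 2 ^ S.card ≤ 2 ^ k * (S.powerset.filter (fun T => (e ∩ T).card = 1)).card := by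
  classical
  set A := e ∩ S with hA
  have hAe : A ⊆ e := Finset.inter_subset_left
  have hAS : A ⊆ S := Finset.inter_subset_right
  obtain ⟨v₀, hv₀S, hv₀e⟩ := hne
  have hm1 : 1 ≤ A.card := Finset.card_pos.mpr ⟨v₀, Finset.mem_inter.mpr ⟨hv₀e, hv₀S⟩⟩
  have hmk : A.card ≤ k := le_trans (Finset.card_le_card hAe) hs
  have hms : A.card ≤ S.card := Finset.card_le_card hAS
  have key : ∀ v ∈ A, ∀ U : Finset V, U ⊆ S \ A → e ∩ insert v U = {v} := by
    intro v hv U hU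
    ext x
    simp only [Finset.mem_inter, Finset.mem_insert, Finset.mem_singleton]
    constructor
    · rintro ⟨hxe, hx | hx⟩
      · exact hx
      · have hxs := Finset.mem_sdiff.mp (hU hx)
        exact (hxs.2 (Finset.mem_inter.mpr ⟨hxe, hxs.1⟩)).elim
    · rintro rfl; exact ⟨hAe hv, Or.inl rfl⟩
  have hinj : (A ×ˢ (S \ A).powerset).card ≤
      (S.powerset.filter (fun T => (e ∩ T).card = 1)).card := by
    apply Finset.card_le_card_of_injOn (fun p => insert p.1 p.2)
    · rintro ⟨v, U⟩ hp
      simp only [Finset.mem_coe, Finset.mem_product, Finset.mem_powerset] at hp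
      obtain ⟨hv, hU⟩ := hp
      simp only [Finset.mem_coe, Finset.mem_filter, Finset.mem_powerset]
      refine ⟨Finset.insert_subset (hAS hv) (hU.trans Finset.sdiff_subset), ?_⟩
      rw [key v hv U hU, Finset.card_singleton]
    · rintro ⟨v, U⟩ hp ⟨v', U'⟩ hp' heq
      simp only [Finset.coe_product, Set.mem_prod, Finset.mem_coe, Finset.mem_powerset] at hp hp'
      obtain ⟨hv, hU⟩ := hp
      obtain ⟨hv', hU'⟩ := hp'
      simp only at heq
      have hvv : v = v' := by
        have h1 := key v hv U hU
        have h2 := key v' hv' U' hU'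
        rw [heq, h2] at h1
        exact (Finset.singleton_inj.mp h1.symm)
      subst hvv
      have hvU : v ∉ U := fun h => (Finset.mem_sdiff.mp (hU h)).2 hv
      have hvU' : v ∉ U' := fun h => (Finset.mem_sdiff.mp (hU' h)).2 hv
      have : U = U' := by
        rw [← Finset.erase_insert hvU, ← Finset.erase_insert hvU', heq]
      simp [this]
  have hcard : (A ×ˢ (S \ A).powerset).card = A.card * 2 ^ (S.card - A.card) := by
    rw [Finset.card_product, Finset.card_powerset, Finset.card_sdiff_of_subset hAS]
  calc k * 2 ^ S.card = k * 2 ^ A.card * 2 ^ (S.card - A.card) := by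
        rw [mul_assoc, ← pow_add, Nat.add_sub_cancel' hms]
    _ ≤ A.card * 2 ^ k * 2 ^ (S.card - A.card) :=
        Nat.mul_le_mul_right _ (aux_pow_stmt1 A.card k hm1 hmk)
    _ = 2 ^ k * (A.card * 2 ^ (S.card - A.card)) := by ring
    _ ≤ 2 ^ k * (A ×ˢ (S \ A).powerset).card := by rw [hcard]
    _ ≤ _ := Nat.mul_le_mul_left _ hinj

/-- If every edge of `H` has size at most `k` and `S` is a vertex cover of `H`,
then there are `H' ⊆ H` and `S' ⊆ S` with `|H'| ≥ (k/2^k)|H|` such that every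
edge of `H'` meets `S'` in exactly one vertex. -/
theorem stmt_1 {V : Type*} [DecidableEq V] (k : ℕ) (hk : 2 ≤ k)
    (H : Finset (Finset V)) (hsize : ∀ e ∈ H, e.card ≤ k)
    (S : Finset V) (hcover : ∀ e ∈ H, ∃ v ∈ S, v ∈ e) :
    ∃ H' ⊆ H, ∃ S' ⊆ S, (k : ℝ) / 2 ^ k * H.card ≤ (H'.card : ℝ) ∧
      ∀ e ∈ H', (e ∩ S').card = 1 := by
  classical
  set P := S.powerset with hP
  set f : Finset V → ℕ := fun T => (H.filter (fun e => (e ∩ T).card = 1)).card with hf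
  have hsum : k * 2 ^ S.card * H.card ≤ 2 ^ k * ∑ T ∈ P, f T := by
    have hswap : ∑ T ∈ P, f T = ∑ e ∈ H, (P.filter (fun T => (e ∩ T).card = 1)).card := by
      simp only [hf, Finset.card_filter]
      rw [Finset.sum_comm]
    rw [hswap, Finset.mul_sum]
    calc k * 2 ^ S.card * H.card = ∑ _e ∈ H, k * 2 ^ S.card := by
          rw [Finset.sum_const, smul_eq_mul, mul_comm]
      _ ≤ _ := Finset.sum_le_sum fun e he =>
          edge_count_stmt1 k S e (hsize e he) (hcover e he)
  have h2 : (0:ℝ) < 2 ^ k := by positivity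
  have hreal : ∑ _T ∈ P, ((k:ℝ) / 2 ^ k * H.card) ≤ ∑ T ∈ P, (f T : ℝ) := by
    rw [Finset.sum_const, nsmul_eq_mul]
    have hPc : (P.card : ℝ) = 2 ^ S.card := by
      rw [hP, Finset.card_powerset]; push_cast; ring
    rw [hPc, show (2:ℝ) ^ S.card * ((k:ℝ) / 2 ^ k * H.card)
        = ((k:ℝ) * 2 ^ S.card * H.card) / 2 ^ k by ring, div_le_iff₀ h2]
    exact_mod_cast hsum.trans_eq (mul_comm _ _)
  have hPne : P.Nonempty := ⟨∅, Finset.empty_mem_powerset S⟩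
  obtain ⟨T, hT, hTle⟩ := Finset.exists_le_of_sum_le hPne hreal
  exact ⟨H.filter (fun e => (e ∩ T).card = 1), Finset.filter_subset _ _, T,
    Finset.mem_powerset.mp hT, hTle, fun e he => (Finset.mem_filter.mp he).2⟩
end

section
/- Let $k, \ell, s$ be positive integers with $k \geq 2$. Let $G$ be a graph with minimum degree at least $(k+1)\ell + s$, and let $\phi$ assign to each edge of $G$ a $k$-element subset of a set $S$, such that incident edges receive disjoint sets (strongly proper). Let $x$ be a vertex and $S_0 \subseteq S$ with $|S_0| \leq s$. Then $G$ contains a path $P$ of length $\ell$ starting at $x$ such that the color sets of the edges of $P$ are pairwise disjoint and each is disjoint from $S_0$. -/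
lemma my_isPath_concat {V : Type*} {G : SimpleGraph V} {u v w : V} {p : G.Walk u v}
    (hp : p.IsPath) (h : G.Adj v w) (hw : w ∉ p.support) : (p.concat h).IsPath := by
  rw [SimpleGraph.Walk.isPath_def, SimpleGraph.Walk.support_concat]
  simp [List.nodup_append, hp.support_nodup, hw]
  exact fun a ha haw => hw (haw ▸ ha)

/-- Given a graph of minimum degree at least `(k+1)ℓ + s` with a strongly proper
edge-coloring by `k`-subsets of `S`, a vertex `x` and a set `S₀ ⊆ S` of size at most `s`,
there is a strongly rainbow path of length `ℓ` from `x` avoiding all colors of `S₀`. -/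
theorem stmt_3 {V : Type*} [Fintype V] {S : Type*} [DecidableEq S]
    (k ℓ s : ℕ) (hk : 2 ≤ k) (hℓ : 1 ≤ ℓ) (hs : 1 ≤ s)
    (G : SimpleGraph V) [DecidableRel G.Adj]
    (hdeg : ∀ v : V, (k + 1) * ℓ + s ≤ G.degree v)
    (φ : Sym2 V → Finset S)
    (hcard : ∀ e ∈ G.edgeSet, (φ e).card = k)
    (hproper : ∀ e ∈ G.edgeSet, ∀ f ∈ G.edgeSet, e ≠ f →
      (∃ v : V, v ∈ e ∧ v ∈ f) → Disjoint (φ e) (φ f))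
    (x : V) (S₀ : Finset S) (hS₀ : S₀.card ≤ s) :
    ∃ (y : V) (P : G.Walk x y), P.IsPath ∧ P.length = ℓ ∧
      P.edges.Pairwise (fun e f => Disjoint (φ e) (φ f)) ∧
      ∀ e ∈ P.edges, Disjoint (φ e) S₀ := by
  classical
  suffices h : ∀ t, t ≤ ℓ → ∃ (y : V) (P : G.Walk x y), P.IsPath ∧ P.length = t ∧
      P.edges.Pairwise (fun e f => Disjoint (φ e) (φ f)) ∧
      ∀ e ∈ P.edges, Disjoint (φ e) S₀ from h ℓ le_rfl
  intro t
  induction t with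
  | zero => intro _; exact ⟨x, .nil, .nil, rfl, by simp, by simp⟩
  | succ t ih =>
    intro ht
    obtain ⟨y, P, hpath, hlen, hpair, hS⟩ := ih (Nat.le_of_succ_le ht)
    set F : Finset S := S₀ ∪ P.edges.toFinset.biUnion φ with hF
    have hedgeG : ∀ e ∈ P.edges, e ∈ G.edgeSet := fun e he => P.edges_subset_edgeSet he
    have hFcard : F.card ≤ s + t * k := by
      calc F.card ≤ S₀.card + (P.edges.toFinset.biUnion φ).card := Finset.card_union_le _ _
        _ ≤ s + t * k := by
          gcongr
          calc (P.edges.toFinset.biUnion φ).card ≤ ∑ e ∈ P.edges.toFinset, (φ e).card :=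
              Finset.card_biUnion_le
            _ ≤ ∑ _e ∈ P.edges.toFinset, k := by
              apply Finset.sum_le_sum
              intro e he
              rw [hcard e (hedgeG e (List.mem_toFinset.mp he))]
            _ = P.edges.toFinset.card * k := by rw [Finset.sum_const, smul_eq_mul]
            _ ≤ t * k := by
              gcongr
              calc P.edges.toFinset.card ≤ P.edges.length := P.edges.toFinset_card_le
                _ = t := by rw [P.length_edges, hlen]
    -- the set of good neighbors
    set B1 : Finset V := (G.neighborFinset y).filter (· ∈ P.support) with hB1
    set B2 : Finset V := (G.neighborFinset y).filter (fun z => ¬ Disjoint (φ s(y, z)) F) with hB2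
    have hB1card : B1.card ≤ t := by
      have hsub : B1 ⊆ P.support.toFinset.erase y := by
        intro z hz
        rw [hB1, Finset.mem_filter] at hz
        rw [Finset.mem_erase, List.mem_toFinset]
        exact ⟨fun h => (G.irrefl (h ▸ (G.mem_neighborFinset y z).mp hz.1)), hz.2⟩
      calc B1.card ≤ _ := Finset.card_le_card hsub
        _ ≤ P.support.toFinset.card - 1 := by
          apply Nat.le_sub_one_of_lt
          apply Finset.card_erase_lt_of_mem
          rw [List.mem_toFinset]; exact P.end_mem_support
        _ ≤ t := by
          have : P.support.toFinset.card = t + 1 := by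
            rw [List.toFinset_card_of_nodup hpath.support_nodup, P.length_support, hlen]
          omega
    have hB2card : B2.card ≤ F.card := by
      have hsub : B2 ⊆ F.biUnion (fun c => (G.neighborFinset y).filter (fun z => c ∈ φ s(y, z))) := by
        intro z hz
        rw [hB2, Finset.mem_filter] at hz
        obtain ⟨c, hc1, hc2⟩ := Finset.not_disjoint_iff.mp hz.2
        exact Finset.mem_biUnion.mpr ⟨c, hc2, Finset.mem_filter.mpr ⟨hz.1, hc1⟩⟩
      calc B2.card ≤ _ := Finset.card_le_card hsub
        _ ≤ ∑ c ∈ F, ((G.neighborFinset y).filter (fun z => c ∈ φ s(y, z))).card :=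
          Finset.card_biUnion_le
        _ ≤ ∑ _c ∈ F, 1 := by
          apply Finset.sum_le_sum
          intro c _
          rw [Finset.card_le_one]
          intro z1 hz1 z2 hz2
          rw [Finset.mem_filter] at hz1 hz2
          by_contra hne
          have hedne : s(y, z1) ≠ s(y, z2) := fun h => hne (Sym2.congr_right.mp h)
          have := hproper s(y, z1) ((G.mem_neighborFinset y z1).mp hz1.1)
            s(y, z2) ((G.mem_neighborFinset y z2).mp hz2.1) hedne
            ⟨y, Sym2.mem_mk_left _ _, Sym2.mem_mk_left _ _⟩
          exact (Finset.disjoint_left.mp this hz1.2) hz2.2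
        _ = F.card := by simp
    set Good : Finset V := (G.neighborFinset y).filter
      (fun z => z ∉ P.support ∧ Disjoint (φ s(y, z)) F) with hGood
    have hGoodne : Good.Nonempty := by
      rw [← Finset.card_pos]
      by_contra hemp
      push_neg at hemp
      have hsub : G.neighborFinset y ⊆ B1 ∪ B2 ∪ Good := by
        intro z hz
        by_cases h1 : z ∈ P.support
        · exact Finset.mem_union_left _ (Finset.mem_union_left _
            (Finset.mem_filter.mpr ⟨hz, h1⟩))
        by_cases h2 : Disjoint (φ s(y, z)) F
        · exact Finset.mem_union_right _ (Finset.mem_filter.mpr ⟨hz, h1, h2⟩)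
        · exact Finset.mem_union_left _ (Finset.mem_union_right _
            (Finset.mem_filter.mpr ⟨hz, h2⟩))
      have hd := hdeg y
      rw [← G.card_neighborFinset_eq_degree] at hd
      have : (G.neighborFinset y).card ≤ B1.card + B2.card + Good.card := by
        calc (G.neighborFinset y).card ≤ (B1 ∪ B2 ∪ Good).card := Finset.card_le_card hsub
          _ ≤ (B1 ∪ B2).card + Good.card := Finset.card_union_le _ _
          _ ≤ B1.card + B2.card + Good.card := by gcongr; exact Finset.card_union_le _ _
      have ht' : t + 1 ≤ ℓ := ht
      nlinarith [hB1card, hB2card, hFcard, hemp]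
    obtain ⟨z, hz⟩ := hGoodne
    rw [hGood, Finset.mem_filter, G.mem_neighborFinset] at hz
    obtain ⟨hadj, hzsup, hzdisj⟩ := hz
    refine ⟨z, P.concat hadj, my_isPath_concat hpath hadj hzsup, ?_, ?_, ?_⟩
    · rw [SimpleGraph.Walk.length_concat, hlen]
    · rw [SimpleGraph.Walk.edges_concat, List.concat_eq_append, List.pairwise_append]
      refine ⟨hpair, List.pairwise_singleton _ _, ?_⟩
      intro e he f hf
      rw [List.mem_singleton] at hf
      subst hf
      have : φ e ⊆ F := by
        intro c hc
        exact Finset.mem_union_right _ (Finset.mem_biUnion.mpr ⟨e, List.mem_toFinset.mpr he, hc⟩)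
      exact (Finset.disjoint_left.mpr (fun a ha hb =>
        Finset.disjoint_left.mp hzdisj hb (this ha)))
    · intro e he
      rw [SimpleGraph.Walk.edges_concat, List.concat_eq_append, List.mem_append] at he
      rcases he with he | he
      · exact hS e he
      · rw [List.mem_singleton] at he
        subst he
        exact hzdisj.mono_right (Finset.subset_union_left)
end

section
/- Let $H$ be a hypergraph (edges of arbitrary size at least 2) and $\pi$ a total (linear) order on its vertex set. If $H$ contains no increasing linear path of length $\ell$ (with respect to $\pi$), then $V(H)$ can be partitioned into $\ell$ independent sets. -/
/-- `IsIncLinPath H ℓ e x` says `e 0, …, e (ℓ-1)` is an increasing linear path of length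
`ℓ` in the hypergraph `H`, with `x i` the intersection vertex of `e i` and `e (i+1)`,
with respect to the linear order on the vertices. -/
def IsIncLinPath {V : Type*} [LinearOrder V] (H : Finset (Finset V)) (ℓ : ℕ)
    (e : ℕ → Finset V) (x : ℕ → V) : Prop :=
  (∀ i < ℓ, e i ∈ H) ∧
  (∀ i, i + 1 < ℓ → e i ∩ e (i + 1) = {x i}) ∧
  (∀ i j, i < j → j < ℓ → j ≠ i + 1 → Disjoint (e i) (e j)) ∧
  (2 ≤ ℓ → ∀ v ∈ e 0, v ≠ x 0 → v < x 0) ∧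
  (2 ≤ ℓ → ∀ v ∈ e (ℓ - 1), v ≠ x (ℓ - 2) → x (ℓ - 2) < v) ∧
  (∀ i, 1 ≤ i → i + 1 < ℓ → ∀ v ∈ e i, v ≠ x (i - 1) → v ≠ x i →
    x (i - 1) < v ∧ v < x i)

section Aux

variable {V : Type*} [LinearOrder V]

/-- An increasing linear path of length `k` "ending" at the vertex `x (k-1)`:
all vertices of `e i` are at most `x i`, and (for `i ≥ 1`) all vertices of `e i`
other than `x (i-1)` are strictly greater than `x (i-1)`. -/
def EndPath (H : Finset (Finset V)) (k : ℕ) (e : ℕ → Finset V) (x : ℕ → V) : Prop :=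
  (∀ i < k, e i ∈ H) ∧
  (∀ i, i + 1 < k → e i ∩ e (i + 1) = {x i}) ∧
  (∀ i j, i < j → j < k → j ≠ i + 1 → Disjoint (e i) (e j)) ∧
  (∀ i, i + 1 < k → x i < x (i + 1)) ∧
  (∀ i < k, x i ∈ e i) ∧
  (∀ i < k, ∀ w ∈ e i, w ≤ x i) ∧
  (∀ i, 1 ≤ i → i < k → ∀ w ∈ e i, w ≠ x (i - 1) → x (i - 1) < w)

lemma EndPath.mono {H : Finset (Finset V)} {k m : ℕ} {e : ℕ → Finset V} {x : ℕ → V}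
    (h : EndPath H k e x) (hm : m ≤ k) : EndPath H m e x := by
  obtain ⟨h1, h2, h3, h4, h5, h6, h7⟩ := h
  exact ⟨fun i hi => h1 i (by omega), fun i hi => h2 i (by omega),
    fun i j hij hj hji => h3 i j hij (by omega) hji,
    fun i hi => h4 i (by omega), fun i hi => h5 i (by omega),
    fun i hi => h6 i (by omega), fun i h1i hi => h7 i h1i (by omega)⟩

lemma EndPath.x_lt {H : Finset (Finset V)} {k : ℕ} {e : ℕ → Finset V} {x : ℕ → V}
    (h : EndPath H k e x) : ∀ i j, i < j → j < k → x i < x j := by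
  intro i j hij hj
  induction j with
  | zero => omega
  | succ j ih =>
    rcases Nat.lt_or_ge i j with h' | h'
    · exact lt_trans (ih h' (by omega)) (h.2.2.2.1 j (by omega))
    · have : i = j := by omega
      subst this
      exact h.2.2.2.1 i (by omega)

lemma EndPath.isIncLinPath {H : Finset (Finset V)} {ℓ : ℕ} {e : ℕ → Finset V} {x : ℕ → V}
    (h : EndPath H ℓ e x) : IsIncLinPath H ℓ e x := by
  obtain ⟨h1, h2, h3, h4, h5, h6, h7⟩ := h
  refine ⟨h1, h2, h3, ?_, ?_, ?_⟩
  · intro hℓ v hv hvne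
    exact lt_of_le_of_ne (h6 0 (by omega) v hv) hvne
  · intro hℓ v hv hvne
    have := h7 (ℓ - 1) (by omega) (by omega) v hv
    rw [Nat.sub_sub] at this
    exact this hvne
  · intro i h1i hi v hv hv1 hv2
    exact ⟨h7 i h1i (by omega) v hv hv1, lt_of_le_of_ne (h6 i (by omega) v hv) hv2⟩

lemma EndPath.extend {H : Finset (Finset V)} {k : ℕ} {E : ℕ → Finset V} {X : ℕ → V}
    (h : EndPath H k E X) (hk : 1 ≤ k) {e : Finset V} (he : e ∈ H) {v : V}
    (hmin : ∀ w ∈ e, X (k - 1) ≤ w) (hmem : X (k - 1) ∈ e)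
    (hv : v ∈ e) (hmax : ∀ w ∈ e, w ≤ v) (hne : X (k - 1) ≠ v) :
    EndPath H (k + 1) (fun i => if i = k then e else E i) (fun i => if i = k then v else X i) := by
  obtain ⟨h1, h2, h3, h4, h5, h6, h7⟩ := h
  refine ⟨?_, ?_, ?_, ?_, ?_, ?_, ?_⟩
  · intro i hi
    dsimp only
    rcases eq_or_ne i k with hik | hik
    · rw [if_pos hik]; exact he
    · rw [if_neg hik]; exact h1 i (by omega)
  · intro i hi
    dsimp only
    rcases eq_or_ne (i + 1) k with hik | hik
    · have hik2 : i ≠ k := by omega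
      have hi1 : i = k - 1 := by omega
      rw [if_neg hik2, if_pos hik, if_neg hik2]
      ext w
      simp only [Finset.mem_inter, Finset.mem_singleton]
      constructor
      · rintro ⟨hw1, hw2⟩
        have hge : X i ≤ w := by rw [hi1]; exact hmin w hw2
        exact le_antisymm (h6 i (by omega) w hw1) hge
      · rintro rfl
        refine ⟨h5 i (by omega), ?_⟩
        rw [hi1]; exact hmem
    · have hik2 : i ≠ k := by omega
      rw [if_neg hik2, if_neg hik, if_neg hik2]
      exact h2 i (by omega)
  · intro i j hij hj hji
    dsimp only
    rcases eq_or_ne j k with hjk | hjk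
    · have hik : i ≠ k := by omega
      rw [if_neg hik, if_pos hjk]
      rw [Finset.disjoint_left]
      intro w hw hw2
      have ha : w ≤ X i := h6 i (by omega) w hw
      have hb : X i < X (k - 1) :=
        EndPath.x_lt ⟨h1, h2, h3, h4, h5, h6, h7⟩ i (k - 1) (by omega) (by omega)
      have hc : X (k - 1) ≤ w := hmin w hw2
      exact absurd (lt_of_le_of_lt ha hb) (not_lt.mpr hc)
    · have hik : i ≠ k := by omega
      rw [if_neg hik, if_neg hjk]
      exact h3 i j hij (by omega) hji
  · intro i hi
    dsimp only
    rcases eq_or_ne (i + 1) k with hik | hik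
    · have hik2 : i ≠ k := by omega
      rw [if_neg hik2, if_pos hik]
      have hi1 : i = k - 1 := by omega
      rw [hi1]
      exact lt_of_le_of_ne (hmin v hv) hne
    · have hik2 : i ≠ k := by omega
      rw [if_neg hik2, if_neg hik]
      exact h4 i (by omega)
  · intro i hi
    dsimp only
    rcases eq_or_ne i k with hik | hik
    · rw [if_pos hik, if_pos hik]; exact hv
    · rw [if_neg hik, if_neg hik]; exact h5 i (by omega)
  · intro i hi w hw
    dsimp only at hw ⊢
    rcases eq_or_ne i k with hik | hik
    · rw [if_pos hik] at hw; rw [if_pos hik]; exact hmax w hw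
    · rw [if_neg hik] at hw; rw [if_neg hik]; exact h6 i (by omega) w hw
  · intro i h1i hi w hw hwne
    dsimp only at hw hwne ⊢
    rcases eq_or_ne i k with hik | hik
    · subst hik
      rw [if_pos rfl] at hw
      rw [if_neg (by omega : i - 1 ≠ i)] at hwne ⊢
      exact lt_of_le_of_ne (hmin w hw) (Ne.symm hwne)
    · rw [if_neg hik] at hw
      rw [if_neg (by omega : i - 1 ≠ k)] at hwne ⊢
      exact h7 i h1i (by omega) w hw hwne

lemma EndPath.base {H : Finset (Finset V)} {e : Finset V} (he : e ∈ H) {v : V}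
    (hv : v ∈ e) (hmax : ∀ w ∈ e, w ≤ v) :
    EndPath H 1 (fun _ => e) (fun _ => v) := by
  refine ⟨fun i _ => he, fun i hi => by omega, fun i j hij hj hji => by omega,
    fun i hi => by omega, fun i _ => hv, fun i _ => hmax, fun i h1i hi => by omega⟩

end Aux

/-- If a hypergraph (with all edges of size at least 2) contains no increasing linear
path of length `ℓ` with respect to a total order on the vertices, then its vertex set can
be partitioned into `ℓ` independent sets. -/
theorem stmt_6 {V : Type*} [LinearOrder V] (H : Finset (Finset V))
    (hsize : ∀ e ∈ H, 2 ≤ e.card) (ℓ : ℕ)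
    (hnopath : ¬ ∃ (e : ℕ → Finset V) (x : ℕ → V), IsIncLinPath H ℓ e x) :
    ∃ f : V → Fin ℓ, ∀ e ∈ H, ∀ i : Fin ℓ, ∃ v ∈ e, f v ≠ i := by
  classical
  rcases Nat.eq_zero_or_pos ℓ with rfl | hℓ
  · -- ℓ = 0 : V must be empty
    have hV : ¬ Nonempty V := by
      rintro ⟨v0⟩
      exact hnopath ⟨fun _ => ∅, fun _ => v0,
        fun i hi => by omega, fun i hi => by omega, fun i j hij hj hji => by omega,
        fun h => by omega, fun h => by omega, fun i h1i hi => by omega⟩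
    refine ⟨fun v => absurd ⟨v⟩ hV, ?_⟩
    intro e he i
    have hpos : 0 < e.card := by have := hsize e he; omega
    obtain ⟨v, hv⟩ := Finset.card_pos.mp hpos
    exact absurd ⟨v⟩ hV
  · have hno : ∀ (k : ℕ) (e : ℕ → Finset V) (x : ℕ → V), EndPath H k e x → k < ℓ := by
      intro k e x h
      by_contra hk
      push_neg at hk
      exact hnopath ⟨e, x, (h.mono hk).isIncLinPath⟩
    set S : V → Set ℕ := fun v => {k | 1 ≤ k ∧ ∃ e x, EndPath H k e x ∧ x (k - 1) = v} with hS
    have hbdd : ∀ v, BddAbove (S v) := by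
      intro v
      refine ⟨ℓ, fun k hk => ?_⟩
      obtain ⟨-, e, x, he, -⟩ := hk
      exact le_of_lt (hno k e x he)
    have hlt : ∀ v, sSup (S v) < ℓ := by
      intro v
      rcases Set.eq_empty_or_nonempty (S v) with h | h
      · rw [h, csSup_empty, Nat.bot_eq_zero]
        exact hℓ
      · obtain ⟨-, e, x, he, -⟩ := Nat.sSup_mem h (hbdd v)
        exact hno _ e x he
    refine ⟨fun v => ⟨sSup (S v), hlt v⟩, ?_⟩
    intro e he i
    have hcard := hsize e he
    have hne : e.Nonempty := Finset.card_pos.mp (by omega)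
    set u := e.min' hne with hu
    set v := e.max' hne with hv
    have huv : u < v := Finset.min'_lt_max'_of_card e (by omega)
    have key : sSup (S u) < sSup (S v) := by
      rcases Set.eq_empty_or_nonempty (S u) with h | h
      · rw [h, csSup_empty, Nat.bot_eq_zero]
        have h1 : (1 : ℕ) ∈ S v :=
          ⟨le_refl 1, fun _ => e, fun _ => v, EndPath.base he (e.max'_mem hne) (fun w hw => e.le_max' w hw), rfl⟩
        have := le_csSup (hbdd v) h1
        omega
      · obtain ⟨hk1, E, X, hE, hXu⟩ := Nat.sSup_mem h (hbdd u)
        have hext := hE.extend hk1 he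
          (fun w hw => by rw [hXu]; exact e.min'_le w hw)
          (by rw [hXu]; exact e.min'_mem hne)
          (e.max'_mem hne) (fun w hw => e.le_max' w hw)
          (by rw [hXu]; exact ne_of_lt huv)
        have hmem : sSup (S u) + 1 ∈ S v := by
          refine ⟨by omega, _, _, hext, ?_⟩
          simp
          exact hv.symm
        have := le_csSup (hbdd v) hmem
        omega
    by_cases hui : (⟨sSup (S u), hlt u⟩ : Fin ℓ) = i
    · refine ⟨v, e.max'_mem hne, fun hc => ?_⟩
      rw [← hui] at hc
      simp only [Fin.mk.injEq] at hc
      omega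
    · exact ⟨u, e.min'_mem hne, hui⟩
end

section
/- Let $H$ be an $r$-uniform leveled linear quasi-tree of height $h$ rooted at $w$, with main levels $L_0, \dots, L_h$. For $1 \leq i \leq h-1$ and distinct vertices $x, y \in L_i$, there exists an $x,y$-path $P$ in $H$ of even length at most $2i$ that is contained in the union of the first $i$ segments $H_0 \cup \cdots \cup H_{i-1}$ and intersects $L_i$ only in $x$ and $y$. -/
/-- An `r`-uniform leveled linear quasi-tree of height `h` rooted at `w`:
segments `seg 0, …, seg (h-1)`, main levels `L 0, …, L h` and companion levels
`L' 0, …, L' (h-1)`.  Each segment `seg i` is the `r`-expansion of the bipartite graph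
`B i = {e ∩ (L i ∪ L' i) : e ∈ seg i}`, every edge meeting `L i`, `L' i` and `L (i+1)`
in exactly one vertex, the whole graph is linear, consecutive segments meet exactly in
the next main level, non-consecutive segments are disjoint, and `L 0 = {w}`. -/
structure LeveledLinearQuasiTree (V : Type*) [DecidableEq V] (r h : ℕ) where
  w : V
  L : ℕ → Finset V
  L' : ℕ → Finset V
  seg : ℕ → Finset (Finset V)
  L_zero : L 0 = {w}
  edge_card : ∀ i < h, ∀ e ∈ seg i, e.card = r
  linear : ∀ i < h, ∀ j < h, ∀ e ∈ seg i, ∀ f ∈ seg j, e ≠ f → (e ∩ f).card ≤ 1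
  meets_main : ∀ i < h, ∀ e ∈ seg i, (e ∩ L i).card = 1
  meets_companion : ∀ i < h, ∀ e ∈ seg i, (e ∩ L' i).card = 1
  meets_next : ∀ i < h, ∀ e ∈ seg i, (e ∩ L (i + 1)).card = 1
  parts_disj₁ : ∀ i < h, Disjoint (L i) (L' i)
  parts_disj₂ : ∀ i < h, Disjoint (L i) (L (i + 1))
  parts_disj₃ : ∀ i < h, Disjoint (L' i) (L (i + 1))
  expansion : ∀ i < h, ∀ e ∈ seg i, ∀ f ∈ seg i, e ≠ f → e ∩ f ⊆ L i ∪ L' i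
  repr_mem : ∀ i < h, ∀ v ∈ L (i + 1), ∃ e ∈ seg i, v ∈ e
  repr_unique : ∀ i < h, ∀ e ∈ seg i, ∀ f ∈ seg i, e ≠ f →
    Disjoint (e ∩ L (i + 1)) (f ∩ L (i + 1))
  no_isolated_main : ∀ i < h, ∀ v ∈ L i, ∃ e ∈ seg i, v ∈ e
  no_isolated_companion : ∀ i < h, ∀ v ∈ L' i, ∃ e ∈ seg i, v ∈ e
  inter_consec : ∀ i, i + 1 < h →
    (seg i).biUnion id ∩ (seg (i + 1)).biUnion id = L (i + 1)
  disj_far : ∀ i < h, ∀ j < h, i + 1 < j →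
    Disjoint ((seg i).biUnion id) ((seg j).biUnion id)

/-- In a leveled linear quasi-tree, any two distinct vertices `x, y` of the main level
`L i` (`1 ≤ i ≤ h-1`) are joined by a linear path of even length at most `2i`, contained
in the first `i` segments, and meeting `L i` only in `x` and `y`. -/
theorem stmt_13 {V : Type*} [DecidableEq V] (r h : ℕ) (hr : 3 ≤ r)
    (T : LeveledLinearQuasiTree V r h) (i : ℕ) (hi1 : 1 ≤ i) (hi2 : i ≤ h - 1)
    (x y : V) (hx : x ∈ T.L i) (hy : y ∈ T.L i) (hxy : x ≠ y) :
    ∃ (k : ℕ) (e : ℕ → Finset V), 1 ≤ k ∧ k ≤ i ∧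
      (∀ t < 2 * k, ∃ j < i, e t ∈ T.seg j) ∧
      (∀ t, t + 1 < 2 * k → (e t ∩ e (t + 1)).card = 1) ∧
      (∀ s t, s < t → t < 2 * k → t ≠ s + 1 → Disjoint (e s) (e t)) ∧
      x ∈ e 0 ∧ y ∈ e (2 * k - 1) ∧
      (∀ t, 0 < t → t < 2 * k → x ∉ e t) ∧
      (∀ t, t < 2 * k - 1 → y ∉ e t) ∧
      (∀ t < 2 * k, e t ∩ T.L i ⊆ {x, y}) := by
  revert hi1 hi2 x y hx hy hxy
  induction i using Nat.strong_induction_on with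
  | _ i IH =>
  intro hi1 hi2 x y hx hy hxy
  obtain ⟨j, rfl⟩ : ∃ j, i = j + 1 := ⟨i - 1, by omega⟩
  have hj : j < h := by omega
  obtain ⟨ex, hex, hxex⟩ := T.repr_mem j hj x hx
  obtain ⟨ey, hey, hyey⟩ := T.repr_mem j hj y hy
  have hxonly : ∀ v ∈ ex, v ∈ T.L (j + 1) → v = x := by
    intro v hv hvL
    exact Finset.card_le_one.mp (T.meets_next j hj ex hex).le v
      (Finset.mem_inter.mpr ⟨hv, hvL⟩) x (Finset.mem_inter.mpr ⟨hxex, hx⟩)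
  have hyonly : ∀ v ∈ ey, v ∈ T.L (j + 1) → v = y := by
    intro v hv hvL
    exact Finset.card_le_one.mp (T.meets_next j hj ey hey).le v
      (Finset.mem_inter.mpr ⟨hv, hvL⟩) y (Finset.mem_inter.mpr ⟨hyey, hy⟩)
  have hexy : ex ≠ ey := by
    rintro rfl
    exact hxy (hxonly y hyey hy).symm
  by_cases hcap : (ex ∩ ey).Nonempty
  · -- Case A: the two edges meet; path of length 2
    refine ⟨1, fun t => if t = 0 then ex else ey, le_refl 1, by omega, ?_, ?_, ?_, ?_, ?_, ?_, ?_, ?_⟩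
    · intro t ht
      refine ⟨j, by omega, ?_⟩
      by_cases h : t = 0 <;> simp [h, hex, hey]
    · intro t ht
      have ht0 : t = 0 := by omega
      subst ht0
      have h1 : (ex ∩ ey).card ≤ 1 := T.linear j hj j hj ex hex ey hey hexy
      have h2 : 0 < (ex ∩ ey).card := Finset.card_pos.mpr hcap
      simpa using (by omega : (ex ∩ ey).card = 1)
    · intro s t hst ht hne; omega
    · simp [hxex]
    · simp [hyey]
    · intro t h0 h2k
      have ht1 : t = 1 := by omega
      subst ht1
      simp only [if_neg one_ne_zero]
      intro hxe
      exact hxy (hyonly x hxe hx)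
    · intro t ht
      have ht0 : t = 0 := by omega
      subst ht0
      simp only [if_pos rfl]
      intro hye
      exact hxy (hxonly y hye hy).symm
    · intro t ht v hv
      rw [Finset.mem_inter] at hv
      by_cases h : t = 0
      · simp only [h, if_pos rfl] at hv
        rw [Finset.mem_insert]
        exact Or.inl (hxonly v hv.1 hv.2)
      · simp only [if_neg h] at hv
        rw [Finset.mem_insert, Finset.mem_singleton]
        exact Or.inr (hyonly v hv.1 hv.2)
  · -- Case B: the two edges are disjoint
    have hdisj : Disjoint ex ey := by
      rw [Finset.disjoint_iff_inter_eq_empty]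
      exact Finset.not_nonempty_iff_eq_empty.mp hcap
    have hj1 : 1 ≤ j := by
      rcases Nat.eq_zero_or_pos j with h0 | h
      · exfalso
        subst h0
        have hw1 : T.w ∈ ex := by
          have h1 := T.meets_main 0 hj ex hex
          obtain ⟨v, hv⟩ := Finset.card_pos.mp (by omega : 0 < (ex ∩ T.L 0).card)
          rw [T.L_zero, Finset.mem_inter, Finset.mem_singleton] at hv
          exact hv.2 ▸ hv.1
        have hw2 : T.w ∈ ey := by
          have h1 := T.meets_main 0 hj ey hey
          obtain ⟨v, hv⟩ := Finset.card_pos.mp (by omega : 0 < (ey ∩ T.L 0).card)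
          rw [T.L_zero, Finset.mem_inter, Finset.mem_singleton] at hv
          exact hv.2 ▸ hv.1
        exact Finset.disjoint_left.mp hdisj hw1 hw2
      · exact h
    have hmx := T.meets_main j hj ex hex
    obtain ⟨x', hx'⟩ := Finset.card_pos.mp (by omega : 0 < (ex ∩ T.L j).card)
    rw [Finset.mem_inter] at hx'
    have hmy := T.meets_main j hj ey hey
    obtain ⟨y', hy'⟩ := Finset.card_pos.mp (by omega : 0 < (ey ∩ T.L j).card)
    rw [Finset.mem_inter] at hy'
    have hx'y' : x' ≠ y' := by
      intro hEq
      subst hEq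
      exact Finset.disjoint_left.mp hdisj hx'.1 hy'.1
    obtain ⟨k', P, hk1, hk2, hPseg, hPcons, hPdisj, hx'P0, hy'Pl, hx'nP, hy'nP, hPL⟩ :=
      IH j (by omega) hj1 (by omega) x' y' hx'.2 hy'.2 hx'y'
    -- vertices of path edges lying in segment j lie in L j
    have hPvert : ∀ s < 2 * k', ∀ v ∈ P s, v ∈ (T.seg j).biUnion id → v ∈ T.L j := by
      intro s hs v hv h2
      obtain ⟨js, hjs, hPs⟩ := hPseg s hs
      have h1 : v ∈ (T.seg js).biUnion id := Finset.mem_biUnion.mpr ⟨P s, hPs, hv⟩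
      rcases Nat.lt_or_ge (js + 1) j with hlt | hge
      · exact absurd h2 (Finset.disjoint_left.mp (T.disj_far js (by omega) j hj hlt) h1)
      · have hje : js + 1 = j := by omega
        have hcons := T.inter_consec js (by omega)
        rw [hje] at hcons
        rw [← hcons]
        exact Finset.mem_inter.mpr ⟨h1, h2⟩
    -- path edges differ from edges of segment j
    have hPneq : ∀ s < 2 * k', ∀ f ∈ T.seg j, P s ≠ f := by
      intro s hs f hf hEq
      have hsub : P s ⊆ T.L j := fun v hv =>
        hPvert s hs v hv (Finset.mem_biUnion.mpr ⟨f, hf, hEq ▸ hv⟩)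
      obtain ⟨js, hjs, hPs⟩ := hPseg s hs
      have hcard := T.edge_card js (by omega) _ hPs
      have hm := T.meets_main j hj f hf
      rw [← hEq, Finset.inter_eq_left.mpr hsub] at hm
      omega
    have hexP : ∀ s, 1 ≤ s → s < 2 * k' → Disjoint ex (P s) := by
      intro s h1 h2
      rw [Finset.disjoint_right]
      intro v hvP hvex
      have hvL : v ∈ T.L j := hPvert s h2 v hvP (Finset.mem_biUnion.mpr ⟨ex, hex, hvex⟩)
      have hvxy := hPL s h2 (Finset.mem_inter.mpr ⟨hvP, hvL⟩)
      rw [Finset.mem_insert, Finset.mem_singleton] at hvxy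
      rcases hvxy with rfl | rfl
      · exact hx'nP s h1 h2 hvP
      · exact Finset.disjoint_left.mp hdisj hvex hy'.1
    have heyP : ∀ s, s < 2 * k' - 1 → Disjoint ey (P s) := by
      intro s h2
      rw [Finset.disjoint_right]
      intro v hvP hvey
      have hvL : v ∈ T.L j := hPvert s (by omega) v hvP (Finset.mem_biUnion.mpr ⟨ey, hey, hvey⟩)
      have hvxy := hPL s (by omega) (Finset.mem_inter.mpr ⟨hvP, hvL⟩)
      rw [Finset.mem_insert, Finset.mem_singleton] at hvxy
      rcases hvxy with rfl | rfl
      · exact Finset.disjoint_left.mp hdisj hx'.1 hvey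
      · exact hy'nP s h2 hvP
    -- no vertex of L (j+1) lies on the inner path
    have hnotP : ∀ z ∈ T.L (j + 1), ∀ s < 2 * k', z ∉ P s := by
      intro z hz s hs hzP
      obtain ⟨f, hf, hzf⟩ := T.repr_mem j hj z hz
      have hzL := hPvert s hs z hzP (Finset.mem_biUnion.mpr ⟨f, hf, hzf⟩)
      exact Finset.disjoint_left.mp (T.parts_disj₂ j hj) hzL hz
    set E : ℕ → Finset V := fun t => if t = 0 then ex else if t < 2 * k' + 1 then P (t - 1) else ey
      with hE
    have hE0 : E 0 = ex := rfl
    have hEm : ∀ t, 1 ≤ t → t ≤ 2 * k' → E t = P (t - 1) := by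
      intro t h1 h2
      simp only [hE]
      rw [if_neg (by omega), if_pos (by omega)]
    have hEl : E (2 * k' + 1) = ey := by
      simp only [hE]
      rw [if_neg (by omega), if_neg (by omega)]
    refine ⟨k' + 1, E, by omega, by omega, ?_, ?_, ?_, ?_, ?_, ?_, ?_, ?_⟩
    · intro t ht
      rcases Nat.eq_zero_or_pos t with rfl | h0
      · refine ⟨j, by omega, ?_⟩
        rw [hE0]; exact hex
      · by_cases hl : t = 2 * k' + 1
        · subst hl
          refine ⟨j, by omega, ?_⟩
          rw [hEl]; exact hey
        · obtain ⟨js, hjs, hPs⟩ := hPseg (t - 1) (by omega)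
          refine ⟨js, by omega, ?_⟩
          rw [hEm t h0 (by omega)]; exact hPs
    · intro t ht
      rcases Nat.eq_zero_or_pos t with rfl | h0
      · rw [hE0, hEm 1 le_rfl (by omega)]
        norm_num
        obtain ⟨j0, hj0, hP0⟩ := hPseg 0 (by omega)
        have hle : (ex ∩ P 0).card ≤ 1 := by
          rw [Finset.inter_comm]
          exact T.linear j0 (by omega) j hj (P 0) hP0 ex hex (hPneq 0 (by omega) ex hex)
        have hpos : 0 < (ex ∩ P 0).card :=
          Finset.card_pos.mpr ⟨x', Finset.mem_inter.mpr ⟨hx'.1, hx'P0⟩⟩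
        omega
      · by_cases hl : t = 2 * k'
        · subst hl
          rw [hEm (2 * k') (by omega) le_rfl, hEl]
          obtain ⟨jl, hjl, hPl⟩ := hPseg (2 * k' - 1) (by omega)
          have hle : (P (2 * k' - 1) ∩ ey).card ≤ 1 :=
            T.linear jl (by omega) j hj _ hPl ey hey (hPneq (2 * k' - 1) (by omega) ey hey)
          have hpos : 0 < (P (2 * k' - 1) ∩ ey).card :=
            Finset.card_pos.mpr ⟨y', Finset.mem_inter.mpr ⟨hy'Pl, hy'.1⟩⟩
          omega
        · rw [hEm t h0 (by omega), hEm (t + 1) (by omega) (by omega)]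
          have hc := hPcons (t - 1) (by omega)
          have ht1 : t - 1 + 1 = t := by omega
          rw [ht1] at hc
          have ht2 : t + 1 - 1 = t := by omega
          rw [ht2]
          exact hc
    · intro s t hst ht hne
      rcases Nat.eq_zero_or_pos s with rfl | hs0
      · by_cases hl : t = 2 * k' + 1
        · subst hl
          rw [hE0, hEl]; exact hdisj
        · rw [hE0, hEm t (by omega) (by omega)]
          exact hexP (t - 1) (by omega) (by omega)
      · by_cases hl : t = 2 * k' + 1
        · subst hl
          rw [hEm s hs0 (by omega), hEl]
          exact (heyP (s - 1) (by omega)).symm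
        · rw [hEm s hs0 (by omega), hEm t (by omega) (by omega)]
          exact hPdisj (s - 1) (t - 1) (by omega) (by omega) (by omega)
    · rw [hE0]; exact hxex
    · have h21 : 2 * (k' + 1) - 1 = 2 * k' + 1 := by omega
      rw [h21, hEl]; exact hyey
    · intro t h0 ht
      by_cases hl : t = 2 * k' + 1
      · subst hl
        rw [hEl]
        intro hxe
        exact hxy (hyonly x hxe hx)
      · rw [hEm t h0 (by omega)]
        exact hnotP x hx (t - 1) (by omega)
    · intro t ht
      rcases Nat.eq_zero_or_pos t with rfl | h0
      · rw [hE0]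
        intro hye
        exact hxy (hxonly y hye hy).symm
      · rw [hEm t h0 (by omega)]
        exact hnotP y hy (t - 1) (by omega)
    · intro t ht v hv
      rcases Nat.eq_zero_or_pos t with rfl | h0
      · rw [hE0, Finset.mem_inter] at hv
        rw [Finset.mem_insert]
        exact Or.inl (hxonly v hv.1 hv.2)
      · by_cases hl : t = 2 * k' + 1
        · subst hl
          rw [hEl, Finset.mem_inter] at hv
          rw [Finset.mem_insert, Finset.mem_singleton]
          exact Or.inr (hyonly v hv.1 hv.2)
        · rw [hEm t h0 (by omega), Finset.mem_inter] at hv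
          exact absurd hv.1 (hnotP v hv.2 (t - 1) (by omega))
end

section
/- Let $H$ be an $r$-uniform leveled linear quasi-tree of height $h$ rooted at $w$, and let $S \subseteq L_h$ (the last main level) with $|S| \geq (hpr)^h$ for positive integers $p, r$ with $r \geq 3$. Then there exists a vertex $x \in V(H)$ such that $|V(H_x) \cap S| \geq \frac{|S|}{(hpr)^{h-1}}$ and the down graph $H_x$ contains a spider centered at $x$ with $p$ legs, each leg being a monotone path from $x$ to a vertex of $V(H_x) \cap S$. -/
/-- `IsMonotonePath T i x f y` : `f i, f (i+1), …, f (h-1)` is a monotone path in the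
leveled linear quasi-tree `T` from the vertex `x ∈ L i ∪ L' i` down to the vertex
`y ∈ L h`, using one edge from each segment `i, i+1, …, h-1`, with consecutive edges
meeting in a single vertex of the intermediate main level, non-consecutive edges
disjoint, and `x` appearing only in the first edge.  Such a path hits every main level
at most once. -/
def IsMonotonePath {V : Type*} [DecidableEq V] {r h : ℕ}
    (T : LeveledLinearQuasiTree V r h) (i : ℕ) (x : V) (f : ℕ → Finset V) (y : V) :
    Prop :=
  (∀ t, i ≤ t → t < h → f t ∈ T.seg t) ∧
  x ∈ f i ∧ y ∈ f (h - 1) ∧ y ∈ T.L h ∧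
  (∀ t, i ≤ t → t + 1 < h →
    (f t ∩ f (t + 1)).card = 1 ∧ f t ∩ f (t + 1) ⊆ T.L (t + 1)) ∧
  (∀ s t, i ≤ s → s + 1 < t → t < h → Disjoint (f s) (f t)) ∧
  (∀ t, i < t → t < h → x ∉ f t)

set_option linter.unusedSectionVars false
set_option linter.unusedVariables false

namespace QTaux

variable {V : Type*} [DecidableEq V] {r h : ℕ}

/-- default-valued element pick -/
noncomputable def theElt (T : LeveledLinearQuasiTree V r h) (s : Finset V) : V :=
  if hs : s.Nonempty then hs.choose else T.w

lemma theElt_mem (T : LeveledLinearQuasiTree V r h) {s : Finset V} (hs : s.Nonempty) :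
    theElt T s ∈ s := by
  rw [theElt, dif_pos hs]; exact hs.choose_spec

/-- parent edge of a vertex -/
noncomputable def pe (T : LeveledLinearQuasiTree V r h) (t : ℕ) (v : V) : Finset V :=
  if hv : ∃ e ∈ T.seg t, v ∈ e then hv.choose else ∅

lemma pe_spec (T : LeveledLinearQuasiTree V r h) {t : ℕ} {v : V}
    (ht : t < h) (hv : v ∈ T.L (t+1)) : pe T t v ∈ T.seg t ∧ v ∈ pe T t v := by
  have hex : ∃ e ∈ T.seg t, v ∈ e := T.repr_mem t ht v hv
  rw [pe, dif_pos hex]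
  exact ⟨hex.choose_spec.1, hex.choose_spec.2⟩

lemma pe_unique (T : LeveledLinearQuasiTree V r h) {t : ℕ} {v : V} {e : Finset V}
    (ht : t < h) (hv : v ∈ T.L (t+1)) (he : e ∈ T.seg t) (hve : v ∈ e) :
    e = pe T t v := by
  by_contra hne
  have hd := T.repr_unique t ht e he (pe T t v) ((pe_spec T ht hv).1) hne
  exact Finset.disjoint_left.1 hd (Finset.mem_inter.2 ⟨hve, hv⟩)
    (Finset.mem_inter.2 ⟨(pe_spec T ht hv).2, hv⟩)

/-- vertex at level `h - k` on the canonical path down from `y ∈ L h` -/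
noncomputable def down (T : LeveledLinearQuasiTree V r h) (y : V) : ℕ → V
  | 0 => y
  | (k+1) => theElt T ((pe T (h - (k+1)) (down T y k)) ∩ T.L (h - (k+1)))

/-- ancestor of `y` at level `t` -/
noncomputable def anc (T : LeveledLinearQuasiTree V r h) (t : ℕ) (y : V) : V :=
  down T y (h - t)

/-- canonical edge of `y` in segment `t` -/
noncomputable def edg (T : LeveledLinearQuasiTree V r h) (t : ℕ) (y : V) : Finset V :=
  pe T t (anc T (t+1) y)

/-- companion of the canonical edge -/
noncomputable def cmp (T : LeveledLinearQuasiTree V r h) (t : ℕ) (y : V) : V :=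
  theElt T (edg T t y ∩ T.L' t)

lemma anc_h (T : LeveledLinearQuasiTree V r h) (y : V) : anc T h y = y := by
  simp [anc, down]

lemma anc_rec (T : LeveledLinearQuasiTree V r h) {t : ℕ} (ht : t < h) (y : V) :
    anc T t y = theElt T ((edg T t y) ∩ T.L t) := by
  have h1 : h - t = (h - (t+1)) + 1 := by omega
  have h2 : h - ((h - (t+1)) + 1) = t := by omega
  rw [anc, h1, down, h2, edg, anc]

lemma anc_mem_L (T : LeveledLinearQuasiTree V r h) {y : V} (hy : y ∈ T.L h)
    {t : ℕ} (ht : t ≤ h) : anc T t y ∈ T.L t := by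
  have key : ∀ k, k ≤ h → down T y k ∈ T.L (h - k) := by
    intro k
    induction k with
    | zero => intro _; simpa [down] using hy
    | succ n ih =>
      intro hn
      have hlt : h - (n+1) < h := by omega
      have hmem : down T y n ∈ T.L (h - (n+1) + 1) := by
        have : h - (n+1) + 1 = h - n := by omega
        rw [this]; exact ih (by omega)
      have hps := pe_spec T hlt hmem
      have hcard := T.meets_main (h - (n+1)) hlt _ hps.1
      have hne : ((pe T (h - (n+1)) (down T y n)) ∩ T.L (h - (n+1))).Nonempty :=
        Finset.card_pos.1 (by omega)
      have := theElt_mem T hne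
      rw [down]
      exact (Finset.mem_inter.1 this).2
  have := key (h - t) (by omega)
  rwa [show h - (h - t) = t by omega] at this

end QTaux


namespace QTaux
variable {V : Type*} [DecidableEq V] {r h : ℕ}

lemma eq_singleton {s : Finset V} {a : V} (hc : s.card = 1) (ha : a ∈ s) : s = {a} := by
  obtain ⟨b, rfl⟩ := Finset.card_eq_one.1 hc
  rw [Finset.mem_singleton] at ha; rw [ha]

section bundle
variable (T : LeveledLinearQuasiTree V r h) {y : V} {t : ℕ}

lemma anc_succ_mem_L (hy : y ∈ T.L h) (ht : t < h) : anc T (t+1) y ∈ T.L (t+1) :=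
  anc_mem_L T hy (by omega)

lemma edg_seg (hy : y ∈ T.L h) (ht : t < h) : edg T t y ∈ T.seg t :=
  (pe_spec T ht (anc_succ_mem_L T hy ht)).1

lemma anc_succ_mem_edg (hy : y ∈ T.L h) (ht : t < h) : anc T (t+1) y ∈ edg T t y :=
  (pe_spec T ht (anc_succ_mem_L T hy ht)).2

lemma edg_inter_next (hy : y ∈ T.L h) (ht : t < h) :
    edg T t y ∩ T.L (t+1) = {anc T (t+1) y} :=
  eq_singleton (T.meets_next t ht _ (edg_seg T hy ht))
    (Finset.mem_inter.2 ⟨anc_succ_mem_edg T hy ht, anc_succ_mem_L T hy ht⟩)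

lemma anc_mem_inter (hy : y ∈ T.L h) (ht : t < h) :
    anc T t y ∈ edg T t y ∩ T.L t := by
  have hcard := T.meets_main t ht _ (edg_seg T hy ht)
  have hne : (edg T t y ∩ T.L t).Nonempty := Finset.card_pos.1 (by omega)
  rw [anc_rec T ht]
  exact theElt_mem T hne

lemma anc_mem_edg (hy : y ∈ T.L h) (ht : t < h) : anc T t y ∈ edg T t y :=
  (Finset.mem_inter.1 (anc_mem_inter T hy ht)).1

lemma edg_inter_main (hy : y ∈ T.L h) (ht : t < h) :
    edg T t y ∩ T.L t = {anc T t y} :=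
  eq_singleton (T.meets_main t ht _ (edg_seg T hy ht)) (anc_mem_inter T hy ht)

lemma cmp_mem_inter (hy : y ∈ T.L h) (ht : t < h) :
    cmp T t y ∈ edg T t y ∩ T.L' t := by
  have hcard := T.meets_companion t ht _ (edg_seg T hy ht)
  have hne : (edg T t y ∩ T.L' t).Nonempty := Finset.card_pos.1 (by omega)
  exact theElt_mem T hne

lemma cmp_mem_edg (hy : y ∈ T.L h) (ht : t < h) : cmp T t y ∈ edg T t y :=
  (Finset.mem_inter.1 (cmp_mem_inter T hy ht)).1

lemma cmp_mem_L' (hy : y ∈ T.L h) (ht : t < h) : cmp T t y ∈ T.L' t :=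
  (Finset.mem_inter.1 (cmp_mem_inter T hy ht)).2

lemma edg_inter_comp (hy : y ∈ T.L h) (ht : t < h) :
    edg T t y ∩ T.L' t = {cmp T t y} :=
  eq_singleton (T.meets_companion t ht _ (edg_seg T hy ht)) (cmp_mem_inter T hy ht)

lemma edg_eq_of_anc_eq {y' : V} (hy : y ∈ T.L h) (ht : t < h)
    (hne : edg T t y = edg T t y') : True := trivial

/-- distinct next-level ancestors give distinct canonical edges -/
lemma edg_ne (hy : y ∈ T.L h) {y' : V} (hy' : y' ∈ T.L h) (ht : t < h)
    (hne : anc T (t+1) y ≠ anc T (t+1) y') : edg T t y ≠ edg T t y' := by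
  intro he
  have h1 := edg_inter_next T hy ht
  have h2 := edg_inter_next T hy' ht
  rw [he, h2] at h1
  exact hne (by simpa using (Finset.singleton_injective h1.symm))

end bundle
end QTaux

namespace QTaux
variable {V : Type*} [DecidableEq V] {r h : ℕ}
variable (T : LeveledLinearQuasiTree V r h)

lemma mem_biUnion_of_edg {t : ℕ} {y z : V} (hy : y ∈ T.L h) (ht : t < h)
    (hz : z ∈ edg T t y) : z ∈ (T.seg t).biUnion id :=
  Finset.mem_biUnion.2 ⟨edg T t y, edg_seg T hy ht, hz⟩

/-- intersection of consecutive canonical edges lies in the intermediate main level -/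
lemma consec_sub {t : ℕ} {y y' : V} (hy : y ∈ T.L h) (hy' : y' ∈ T.L h)
    (ht : t + 1 < h) : edg T t y ∩ edg T (t+1) y' ⊆ T.L (t+1) := by
  intro z hz
  rw [← T.inter_consec t ht]
  rcases Finset.mem_inter.1 hz with ⟨h1, h2⟩
  exact Finset.mem_inter.2 ⟨mem_biUnion_of_edg T hy (by omega) h1,
    mem_biUnion_of_edg T hy' ht h2⟩

lemma far_disj {s t : ℕ} {y y' : V} (hy : y ∈ T.L h) (hy' : y' ∈ T.L h)
    (hs : s + 1 < t) (ht : t < h) : Disjoint (edg T s y) (edg T t y') := by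
  have := T.disj_far s (by omega) t ht hs
  exact Finset.disjoint_left.2 fun {z} hz hz' =>
    Finset.disjoint_left.1 this (mem_biUnion_of_edg T hy (by omega) hz)
      (mem_biUnion_of_edg T hy' ht hz')

/-- the canonical path is a monotone path -/
lemma canonical_path {i : ℕ} {x y : V} (hy : y ∈ T.L h) (hi : i < h)
    (hx : x ∈ T.L i ∪ T.L' i) (hxe : x ∈ edg T i y) :
    IsMonotonePath T i x (fun t => edg T t y) y := by
  refine ⟨fun t _ ht => edg_seg T hy ht, hxe, ?_, hy, ?_, ?_, ?_⟩
  · have : anc T (h-1+1) y ∈ edg T (h-1) y := anc_succ_mem_edg T hy (by omega)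
    rwa [show h - 1 + 1 = h by omega, anc_h] at this
  · intro t _ ht
    have hsub : edg T t y ∩ edg T (t+1) y ⊆ T.L (t+1) := consec_sub T hy hy ht
    have hsub2 : edg T t y ∩ edg T (t+1) y ⊆ {anc T (t+1) y} := by
      intro z hz
      rw [← edg_inter_next T hy (by omega : t < h)]
      exact Finset.mem_inter.2 ⟨(Finset.mem_inter.1 hz).1, hsub hz⟩
    have hmem : anc T (t+1) y ∈ edg T t y ∩ edg T (t+1) y :=
      Finset.mem_inter.2 ⟨anc_succ_mem_edg T hy (by omega), anc_mem_edg T hy ht⟩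
    have heq : edg T t y ∩ edg T (t+1) y = {anc T (t+1) y} :=
      Finset.Subset.antisymm hsub2 (Finset.singleton_subset_iff.2 hmem)
    rw [heq]
    exact ⟨Finset.card_singleton _, by rw [← heq]; exact hsub⟩
  · intro s t _ hst ht; exact far_disj T hy hy hst ht
  · intro t hit ht hxt
    rcases Nat.lt_or_ge (i+1) t with h2 | h2
    · exact Finset.disjoint_left.1 (far_disj T hy hy h2 ht) hxe hxt
    · have hti : t = i + 1 := by omega
      subst hti
      have : x ∈ T.L (i+1) :=
        consec_sub T hy hy ht (Finset.mem_inter.2 ⟨hxe, hxt⟩)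
      rcases Finset.mem_union.1 hx with hxm | hxm
      · exact Finset.disjoint_left.1 (T.parts_disj₂ i hi) hxm this
      · exact Finset.disjoint_left.1 (T.parts_disj₃ i hi) hxm this

/-- two canonical paths with everywhere-distinct ancestors and companions below level
`i` meet only in `x` -/
lemma cross_disj {i : ℕ} {x y y' : V} (hy : y ∈ T.L h) (hy' : y' ∈ T.L h)
    (hi : i < h) (hxe : x ∈ edg T i y) (hxe' : x ∈ edg T i y')
    (hA : ∀ t, i < t → t ≤ h → anc T t y ≠ anc T t y')
    (hC : ∀ t, i < t → t < h → cmp T t y ≠ cmp T t y') :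
    ∀ s t, i ≤ s → s < h → i ≤ t → t < h → edg T s y ∩ edg T t y' ⊆ {x} := by
  have lt_case : ∀ (u u' : V), u ∈ T.L h → u' ∈ T.L h →
      (∀ t, i < t → t ≤ h → anc T t u ≠ anc T t u') →
      ∀ s t, i ≤ s → s < t → t < h → ∀ z, z ∈ edg T s u ∩ edg T t u' → False := by
    intro u u' hu hu' hAu s t hs hst ht z hz
    rcases Finset.mem_inter.1 hz with ⟨h1, h2⟩
    rcases Nat.lt_or_ge (s+1) t with h3 | h3
    · exact Finset.disjoint_left.1 (far_disj T hu hu' h3 ht) h1 h2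
    · have hts : t = s + 1 := by omega
      subst hts
      have hzL : z ∈ T.L (s+1) := consec_sub T hu hu' ht hz
      have e1 : z = anc T (s+1) u := by
        have := Finset.mem_inter.2 ⟨h1, hzL⟩
        rw [edg_inter_next T hu (by omega)] at this
        simpa using this
      have e2 : z = anc T (s+1) u' := by
        have := Finset.mem_inter.2 ⟨h2, hzL⟩
        rw [edg_inter_main T hu' ht] at this
        simpa using this
      exact hAu (s+1) (by omega) (by omega) (e1 ▸ e2 ▸ rfl)
  intro s t hs hsh htt hth z hz
  rcases lt_trichotomy s t with hst | hst | hst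
  · exact absurd hz (fun hzz => lt_case y y' hy hy' hA s t hs hst hth z hzz)
  · subst hst
    have hedne : edg T s y ≠ edg T s y' :=
      edg_ne T hy hy' hsh (hA (s+1) (by omega) (by omega))
    rcases Finset.mem_inter.1 hz with ⟨h1, h2⟩
    rcases Nat.eq_or_lt_of_le hs with hsi | hsi
    · -- s = i : both edges contain x, linearity
      have hcard := T.linear s hsh s hsh _ (edg_seg T hy hsh) _ (edg_seg T hy' hsh) hedne
      have hxmem : x ∈ edg T s y ∩ edg T s y' :=
        Finset.mem_inter.2 ⟨hsi ▸ hxe, hsi ▸ hxe'⟩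
      have := Finset.card_le_one.1 hcard z hz x hxmem
      simpa using this
    · -- s > i : intersection is in L s ∪ L' s, contradicting distinct anc/cmp
      exfalso
      have hsub := T.expansion s hsh _ (edg_seg T hy hsh) _ (edg_seg T hy' hsh) hedne
      rcases Finset.mem_union.1 (hsub hz) with hzm | hzm
      · have e1 : z = anc T s y := by
          have := Finset.mem_inter.2 ⟨h1, hzm⟩
          rw [edg_inter_main T hy hsh] at this; simpa using this
        have e2 : z = anc T s y' := by
          have := Finset.mem_inter.2 ⟨h2, hzm⟩
          rw [edg_inter_main T hy' hsh] at this; simpa using this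
        exact hA s hsi (by omega) (e1 ▸ e2 ▸ rfl)
      · have e1 : z = cmp T s y := by
          have := Finset.mem_inter.2 ⟨h1, hzm⟩
          rw [edg_inter_comp T hy hsh] at this; simpa using this
        have e2 : z = cmp T s y' := by
          have := Finset.mem_inter.2 ⟨h2, hzm⟩
          rw [edg_inter_comp T hy' hsh] at this; simpa using this
        exact hC s hsi hsh (e1 ▸ e2 ▸ rfl)
  · refine absurd hz (fun hzz => lt_case y' y hy' hy (fun u h1 h2 => (hA u h1 h2).symm)
      t s htt hst hsh z ?_)
    rcases Finset.mem_inter.1 hzz with ⟨h1, h2⟩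
    exact Finset.mem_inter.2 ⟨h2, h1⟩

end QTaux

/-- In a leveled linear quasi-tree of height `h` with a set `S ⊆ L h` of size at least
`(hpr)^h`, there is a vertex `x` (in some `L i ∪ L' i`) such that at least a
`1/(hpr)^{h-1}` fraction of `S` lies below `x`, and there is a spider centered at `x`
with `p` legs, each a monotone path from `x` to `S`, pairwise meeting only in `x`. -/
theorem stmt_19 {V : Type*} [DecidableEq V] (r h p : ℕ) (hr : 3 ≤ r) (hh : 1 ≤ h)
    (hp : 1 ≤ p) (T : LeveledLinearQuasiTree V r h)
    (S : Finset V) (hS : S ⊆ T.L h) (hScard : (h * p * r) ^ h ≤ S.card) :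
    ∃ i < h, ∃ x ∈ T.L i ∪ T.L' i,
      S.card ≤ (h * p * r) ^ (h - 1) *
        Set.ncard {y : V | y ∈ S ∧ ∃ f : ℕ → Finset V, IsMonotonePath T i x f y} ∧
      ∃ (legs : Fin p → ℕ → Finset V) (ends : Fin p → V),
        (∀ a : Fin p, ends a ∈ S ∧ IsMonotonePath T i x (legs a) (ends a)) ∧
        (∀ a b : Fin p, a ≠ b → ∀ s t, i ≤ s → s < h → i ≤ t → t < h →
          legs a s ∩ legs b t ⊆ {x}) := by

  classical
  open QTaux in
  set c := h * p * r with hc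
  have hc3 : 3 ≤ c := by
    calc 3 = 1 * 1 * 3 := by norm_num
    _ ≤ h * p * r := by
      apply Nat.mul_le_mul (Nat.mul_le_mul hh hp) hr
  have hc1 : 1 ≤ c := by omega
  have hs1 : 1 ≤ S.card := le_trans (Nat.one_le_pow _ _ (by omega)) hScard
  have hch : c ^ h ≤ S.card := hScard
  set Mset : ℕ → V → Finset V := fun j z =>
    S.filter (fun y => QTaux.anc T j y = z ∨ QTaux.cmp T j y = z) with hMsetDef
  have hMS : ∀ j z, ∀ y ∈ Mset j z, y ∈ S := by
    intro j z y hy; exact (Finset.mem_filter.1 hy).1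
  set P : ℕ → Prop := fun j => ∃ z ∈ T.L j ∪ T.L' j, S.card ≤ c ^ j * (Mset j z).card
    with hPdef
  have hP0 : P 0 := by
    refine ⟨T.w, Finset.mem_union_left _ (by rw [T.L_zero]; exact Finset.mem_singleton_self _), ?_⟩
    have hsub : S ⊆ Mset 0 T.w := by
      intro y hy
      refine Finset.mem_filter.2 ⟨hy, Or.inl ?_⟩
      have := QTaux.anc_mem_L T (hS hy) (Nat.zero_le h)
      rw [T.L_zero] at this
      exact Finset.mem_singleton.1 this
    simpa using Finset.card_le_card hsub
  set i := Nat.findGreatest P (h - 1) with hidef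
  have hile : i ≤ h - 1 := Nat.findGreatest_le _
  have hih : i < h := by omega
  have hPi : P i := Nat.findGreatest_spec (Nat.zero_le _) hP0
  obtain ⟨x, hxL, hMx⟩ := hPi
  have hneg : ∀ j, i < j → j ≤ h - 1 → ∀ z ∈ T.L j ∪ T.L' j,
      c ^ j * (Mset j z).card < S.card := by
    intro j hj1 hj2 z hzL
    by_contra hcon
    push_neg at hcon
    exact Nat.findGreatest_is_greatest hj1 hj2 ⟨z, hzL, hcon⟩
  set B := (S.card - 1) / c ^ (i + 1) with hBdef
  have hCpos : 0 < c ^ (i + 1) := Nat.pow_pos (by omega)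
  have hMB : ∀ j, i < j → j ≤ h - 1 → ∀ z ∈ T.L j ∪ T.L' j, (Mset j z).card ≤ B := by
    intro j hj1 hj2 z hzL
    have h1 := hneg j hj1 hj2 z hzL
    have h2 : (Mset j z).card * c ^ (i + 1) ≤ (Mset j z).card * c ^ j :=
      Nat.mul_le_mul_left _ (Nat.pow_le_pow_right hc1 hj1)
    rw [hBdef]
    rw [Nat.le_div_iff_mul_le hCpos]
    have h3 : (Mset j z).card * c ^ j = c ^ j * (Mset j z).card := Nat.mul_comm _ _
    omega
  -- "good pair" relation: disjoint ancestors and companions below level i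
  set GoodP : V → V → Prop := fun y z =>
    (∀ t ∈ Finset.Ioc i h, QTaux.anc T t y ≠ QTaux.anc T t z) ∧
    (∀ t ∈ Finset.Ioo i h, QTaux.cmp T t y ≠ QTaux.cmp T t z) with hGoodDef
  have hGoodSymm : ∀ y z, GoodP y z → GoodP z y := by
    intro y z hyz
    exact ⟨fun t ht => (hyz.1 t ht).symm, fun t ht => (hyz.2 t ht).symm⟩
  set BadSet : V → Finset V := fun z => S.filter (fun y => ¬ GoodP y z) with hBadDef
  have hBadcard : ∀ z ∈ S, (BadSet z).card ≤ (h - 1 - i) * (2 * B) + 1 := by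
    intro z hz
    have hsub : BadSet z ⊆
        ((Finset.Ioc i (h - 1)).biUnion fun t =>
          Mset t (QTaux.anc T t z) ∪ Mset t (QTaux.cmp T t z)) ∪ {z} := by
      intro y hy
      rcases Finset.mem_filter.1 hy with ⟨hyS, hyB⟩
      rw [hGoodDef] at hyB
      rw [not_and_or] at hyB
      rcases hyB with hyB | hyB
      · push_neg at hyB
        obtain ⟨t, htmem, hteq⟩ := hyB
        rcases Finset.mem_Ioc.1 htmem with ⟨ht1, ht2⟩
        rcases Nat.eq_or_lt_of_le ht2 with hth | hth
        · -- t = h : then y = z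
          apply Finset.mem_union_right
          have hyz : y = z := by
            have e1 := QTaux.anc_h T y
            have e2 := QTaux.anc_h T z
            rw [hth] at hteq
            rw [e1, e2] at hteq
            exact hteq
          simp [hyz]
        · apply Finset.mem_union_left
          refine Finset.mem_biUnion.2 ⟨t, Finset.mem_Ioc.2 ⟨ht1, by omega⟩, ?_⟩
          exact Finset.mem_union_left _ (Finset.mem_filter.2 ⟨hyS, Or.inl hteq⟩)
      · push_neg at hyB
        obtain ⟨t, htmem, hteq⟩ := hyB
        rcases Finset.mem_Ioo.1 htmem with ⟨ht1, ht2⟩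
        apply Finset.mem_union_left
        refine Finset.mem_biUnion.2 ⟨t, Finset.mem_Ioc.2 ⟨ht1, by omega⟩, ?_⟩
        exact Finset.mem_union_right _ (Finset.mem_filter.2 ⟨hyS, Or.inr hteq⟩)
    calc (BadSet z).card ≤ _ := Finset.card_le_card hsub
    _ ≤ ((Finset.Ioc i (h - 1)).biUnion fun t =>
          Mset t (QTaux.anc T t z) ∪ Mset t (QTaux.cmp T t z)).card + 1 := by
        apply le_trans (Finset.card_union_le _ _)
        simp
    _ ≤ (h - 1 - i) * (2 * B) + 1 := by
        have hbu : ((Finset.Ioc i (h - 1)).biUnion fun t =>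
            Mset t (QTaux.anc T t z) ∪ Mset t (QTaux.cmp T t z)).card ≤
            (h - 1 - i) * (2 * B) := by
          apply le_trans (Finset.card_biUnion_le)
          have hbound : ∀ t ∈ Finset.Ioc i (h - 1),
              (Mset t (QTaux.anc T t z) ∪ Mset t (QTaux.cmp T t z)).card ≤ 2 * B := by
            intro t htmem
            rcases Finset.mem_Ioc.1 htmem with ⟨ht1, ht2⟩
            have hth : t < h := by omega
            have b1 : (Mset t (QTaux.anc T t z)).card ≤ B :=
              hMB t ht1 ht2 _ (Finset.mem_union_left _
                (QTaux.anc_mem_L T (hS hz) (by omega)))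
            have b2 : (Mset t (QTaux.cmp T t z)).card ≤ B :=
              hMB t ht1 ht2 _ (Finset.mem_union_right _
                (QTaux.cmp_mem_L' T (hS hz) hth))
            calc _ ≤ (Mset t (QTaux.anc T t z)).card + (Mset t (QTaux.cmp T t z)).card :=
                Finset.card_union_le _ _
            _ ≤ 2 * B := by omega
          calc (Finset.Ioc i (h-1)).sum (fun t =>
              (Mset t (QTaux.anc T t z) ∪ Mset t (QTaux.cmp T t z)).card)
              ≤ (Finset.Ioc i (h-1)).sum (fun _ => 2 * B) := Finset.sum_le_sum hbound
          _ = (h - 1 - i) * (2 * B) := by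
              rw [Finset.sum_const, Nat.card_Ioc, smul_eq_mul]
        omega
    _ = (h - 1 - i) * (2 * B) + 1 := rfl
  -- the main counting bound
  have hMxB : (p - 1) * ((h - 1 - i) * (2 * B) + 1) + 1 ≤ (Mset i x).card := by
    have hBC : B * c ^ (i + 1) ≤ S.card - 1 := Nat.div_mul_le_self _ _
    have hMC : S.card * c ≤ (Mset i x).card * c ^ (i + 1) := by
      calc S.card * c ≤ (c ^ i * (Mset i x).card) * c := Nat.mul_le_mul_right _ hMx
      _ = (Mset i x).card * c ^ (i + 1) := by rw [pow_succ]; ring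
    have hCs : c ^ (i + 1) ≤ S.card := le_trans (Nat.pow_le_pow_right hc1 (by omega)) hch
    have hmh : h - 1 - i ≤ h := by omega
    -- multiply everything by C := c ^ (i+1)
    apply Nat.le_of_mul_le_mul_right _ hCpos
    have e1 : ((p - 1) * ((h - 1 - i) * (2 * B) + 1) + 1) * c ^ (i + 1) =
        (p - 1) * ((h - 1 - i) * (2 * (B * c ^ (i + 1)))) + (p - 1) * c ^ (i + 1)
          + c ^ (i + 1) := by ring
    rw [e1]
    have t1 : (p - 1) * ((h - 1 - i) * (2 * (B * c ^ (i + 1)))) ≤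
        (p - 1) * (h * (2 * (S.card - 1))) := by
      apply Nat.mul_le_mul_left
      apply Nat.mul_le_mul hmh
      omega
    have t2 : (p - 1) * c ^ (i + 1) + c ^ (i + 1) ≤ p * S.card := by
      have : (p - 1) * c ^ (i + 1) + c ^ (i + 1) = p * c ^ (i + 1) := by
        have : p - 1 + 1 = p := by omega
        calc (p - 1) * c ^ (i + 1) + c ^ (i + 1) = (p - 1 + 1) * c ^ (i + 1) := by ring
        _ = p * c ^ (i + 1) := by rw [this]
      rw [this]
      exact Nat.mul_le_mul_left _ hCs
    have t3 : (p - 1) * (h * (2 * (S.card - 1))) + p * S.card ≤ S.card * c := by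
      have h1 : (p - 1) * (h * (2 * (S.card - 1))) ≤ 2 * (h * p * S.card) := by
        calc (p - 1) * (h * (2 * (S.card - 1))) ≤ p * (h * (2 * S.card)) :=
          Nat.mul_le_mul (by omega) (Nat.mul_le_mul_left _ (by omega))
        _ = 2 * (h * p * S.card) := by ring
      have h2 : p * S.card ≤ h * p * S.card := by
        calc p * S.card = 1 * (p * S.card) := by ring
        _ ≤ h * (p * S.card) := Nat.mul_le_mul_right _ hh
        _ = h * p * S.card := by ring
      have h3 : S.card * c = S.card * (h * p * r) := by rw [hc]
      have h4 : 3 * (h * p * S.card) ≤ S.card * (h * p * r) := by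
        calc 3 * (h * p * S.card) = S.card * (h * p * 3) := by ring
        _ ≤ S.card * (h * p * r) := Nat.mul_le_mul_left _ (Nat.mul_le_mul_left _ hr)
      omega
    calc (p - 1) * ((h - 1 - i) * (2 * (B * c ^ (i + 1)))) + (p - 1) * c ^ (i + 1)
          + c ^ (i + 1)
        ≤ (p - 1) * (h * (2 * (S.card - 1))) + p * S.card := by omega
    _ ≤ S.card * c := t3
    _ ≤ (Mset i x).card * c ^ (i + 1) := hMC
  -- greedy selection of p pairwise-good endpoints
  have hxedg : ∀ y ∈ Mset i x, x ∈ QTaux.edg T i y := by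
    intro y hy
    rcases Finset.mem_filter.1 hy with ⟨hyS, hyp⟩
    rcases hyp with hyp | hyp
    · exact hyp ▸ QTaux.anc_mem_edg T (hS hyS) hih
    · exact hyp ▸ QTaux.cmp_mem_edg T (hS hyS) hih
  have key : ∀ k, k ≤ p → ∃ g : Fin k → V, (∀ a, g a ∈ Mset i x) ∧
      ∀ a b, a ≠ b → GoodP (g a) (g b) := by
    intro k
    induction k with
    | zero => exact fun _ => ⟨Fin.elim0, fun a => a.elim0, fun a => a.elim0⟩
    | succ n ih =>
      intro hn
      obtain ⟨g, hg1, hg2⟩ := ih (by omega)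
      set Avail := (Mset i x).filter (fun y => ∀ b, GoodP y (g b)) with hAv
      have hsub : Mset i x ⊆
          Avail ∪ Finset.univ.biUnion (fun b : Fin n => BadSet (g b)) := by
        intro y hy
        by_cases hgood : ∀ b, GoodP y (g b)
        · exact Finset.mem_union_left _ (Finset.mem_filter.2 ⟨hy, hgood⟩)
        · push_neg at hgood
          obtain ⟨b, hb⟩ := hgood
          refine Finset.mem_union_right _ (Finset.mem_biUnion.2 ⟨b, Finset.mem_univ _, ?_⟩)
          exact Finset.mem_filter.2 ⟨hMS _ _ _ hy, hb⟩
      have hcard : (Mset i x).card ≤ Avail.card + n * ((h - 1 - i) * (2 * B) + 1) := by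
        calc (Mset i x).card ≤ _ := Finset.card_le_card hsub
        _ ≤ Avail.card +
            (Finset.univ.biUnion (fun b : Fin n => BadSet (g b))).card :=
          Finset.card_union_le _ _
        _ ≤ Avail.card + n * ((h - 1 - i) * (2 * B) + 1) := by
          have : (Finset.univ.biUnion (fun b : Fin n => BadSet (g b))).card ≤
              n * ((h - 1 - i) * (2 * B) + 1) := by
            apply le_trans (Finset.card_biUnion_le)
            calc (Finset.univ : Finset (Fin n)).sum (fun b => (BadSet (g b)).card)
                ≤ (Finset.univ : Finset (Fin n)).sum
                  (fun _ => (h - 1 - i) * (2 * B) + 1) :=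
                Finset.sum_le_sum (fun b _ => hBadcard (g b) (hMS _ _ _ (hg1 b)))
            _ = n * ((h - 1 - i) * (2 * B) + 1) := by
                rw [Finset.sum_const, Finset.card_univ, Fintype.card_fin, smul_eq_mul]
          omega
      have hAvail : Avail.Nonempty := by
        rw [← Finset.card_pos]
        have hnle : n * ((h - 1 - i) * (2 * B) + 1) ≤
            (p - 1) * ((h - 1 - i) * (2 * B) + 1) :=
          Nat.mul_le_mul_right _ (by omega)
        omega
      obtain ⟨y0, hy0⟩ := hAvail
      have hy0M : y0 ∈ Mset i x := (Finset.mem_filter.1 hy0).1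
      have hy0G : ∀ b, GoodP y0 (g b) := (Finset.mem_filter.1 hy0).2
      refine ⟨Fin.cons y0 g, ?_, ?_⟩
      · intro a
        rcases Fin.eq_zero_or_eq_succ a with rfl | ⟨a', rfl⟩
        · simpa using hy0M
        · simpa using hg1 a'
      · intro a b hab
        rcases Fin.eq_zero_or_eq_succ a with rfl | ⟨a', rfl⟩ <;>
          rcases Fin.eq_zero_or_eq_succ b with rfl | ⟨b', rfl⟩
        · exact absurd rfl hab
        · simpa using hy0G b'
        · simpa using hGoodSymm _ _ (hy0G a')
        · have : a' ≠ b' := by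
            intro hab'
            exact hab (by rw [hab'])
          simpa using hg2 a' b' this
  obtain ⟨g, hg1, hg2⟩ := key p le_rfl
  have hpath : ∀ y ∈ Mset i x,
      IsMonotonePath T i x (fun t => QTaux.edg T t y) y := by
    intro y hy
    exact QTaux.canonical_path T (hS (hMS _ _ _ hy)) hih hxL (hxedg y hy)
  refine ⟨i, hih, x, hxL, ?_, ?_⟩
  · -- the ncard bound
    have hsubset : ↑(Mset i x) ⊆
        {y : V | y ∈ S ∧ ∃ f : ℕ → Finset V, IsMonotonePath T i x f y} := by
      intro y hy
      rw [Finset.mem_coe] at hy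
      exact ⟨hMS _ _ _ hy, fun t => QTaux.edg T t y, hpath y hy⟩
    have hfin : {y : V | y ∈ S ∧ ∃ f : ℕ → Finset V, IsMonotonePath T i x f y}.Finite :=
      Set.Finite.subset S.finite_toSet (fun y hy => hy.1)
    have h1 : (Mset i x).card ≤
        Set.ncard {y : V | y ∈ S ∧ ∃ f : ℕ → Finset V, IsMonotonePath T i x f y} := by
      rw [← Set.ncard_coe_finset]
      exact Set.ncard_le_ncard hsubset hfin
    calc S.card ≤ c ^ i * (Mset i x).card := hMx
    _ ≤ c ^ (h - 1) *
        Set.ncard {y : V | y ∈ S ∧ ∃ f : ℕ → Finset V, IsMonotonePath T i x f y} :=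
      Nat.mul_le_mul (Nat.pow_le_pow_right hc1 hile) h1
  · -- the spider
    refine ⟨fun a t => QTaux.edg T t (g a), fun a => g a, ?_, ?_⟩
    · exact fun a => ⟨hMS _ _ _ (hg1 a), hpath _ (hg1 a)⟩
    · intro a b hab s t hs hsh htt hth
      have hGood := hg2 a b hab
      exact QTaux.cross_disj T (hS (hMS _ _ _ (hg1 a))) (hS (hMS _ _ _ (hg1 b))) hih
        (hxedg _ (hg1 a)) (hxedg _ (hg1 b))
        (fun u hu1 hu2 => hGood.1 u (Finset.mem_Ioc.2 ⟨hu1, hu2⟩))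
        (fun u hu1 hu2 => hGood.2 u (Finset.mem_Ioo.2 ⟨hu1, hu2⟩))
        s t hs hsh htt hth
end
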